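/- Let K be a field and R = K[X_1,…,X_n]. If I is a transversal polymatroidal ideal, i.e., I = P_1⋯P_w is a product of ideals each generated by a nonempty subset of the variables X_1,…,X_n, then Ass(R/I) = Ass(R/I^k) for all integers k > 0. -/

import Mathlib

open MvPolynomial Finset Pointwise

namespace TransAss

set_option linter.unusedSectionVars false

variable {n : ℕ} {ι : Type*} [Fintype ι] [DecidableEq ι]

/-- Sum of the exponents of `a` over the variable set `B`. -/
def sig (B : Finset (Fin n)) (a : Fin n →₀ ℕ) : ℕ := ∑ j ∈ B, a j

lemma sig_mono_set {B B' : Finset (Fin n)} (h : B ⊆ B') (a : Fin n →₀ ℕ) :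
    sig B a ≤ sig B' a :=
  Finset.sum_le_sum_of_subset h

lemma sig_add (B : Finset (Fin n)) (a b : Fin n →₀ ℕ) :
    sig B (a + b) = sig B a + sig B b := by
  simp [sig, Finsupp.add_apply, Finset.sum_add_distrib]

lemma sig_single (B : Finset (Fin n)) (l : Fin n) (c : ℕ) :
    sig B (Finsupp.single l c) = if l ∈ B then c else 0 := by
  simp [sig, Finsupp.single_apply, Finset.sum_ite_eq' B l fun _ => c]

lemma sig_mono_exp {a b : Fin n →₀ ℕ} (h : a ≤ b) (B : Finset (Fin n)) :
    sig B a ≤ sig B b :=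
  Finset.sum_le_sum fun j _ => Finsupp.le_def.mp h j

lemma sig_finsum {β : Type*} (s : Finset β) (f : β → (Fin n →₀ ℕ)) (B : Finset (Fin n)) :
    sig B (∑ x ∈ s, f x) = ∑ x ∈ s, sig B (f x) := by
  classical
  induction s using Finset.induction with
  | empty => simp [sig]
  | insert _ _ h ih => rw [Finset.sum_insert h, sig_add, ih, Finset.sum_insert h]

lemma sig_eq_of_subset {B B' : Finset (Fin n)} {a : Fin n →₀ ℕ} (h : B ⊆ B')
    (h0 : ∀ j ∉ B, a j = 0) : sig B' a = sig B a :=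
  (Finset.sum_subset h fun j _ hj => h0 j hj).symm

lemma one_le_sig_iff {A : Finset (Fin n)} {b : Fin n →₀ ℕ} :
    1 ≤ sig A b ↔ ∃ l ∈ A, b l ≠ 0 := by
  rw [Nat.one_le_iff_ne_zero, sig, Ne, Finset.sum_eq_zero_iff]
  push_neg
  rfl

variable (t : ι → Finset (Fin n))

/-- The set of exponents of the canonical monomial generators of the transversal ideal:
sums of one variable from each factor. -/
def Egen : Set (Fin n →₀ ℕ) :=
  {μ | ∃ j : ι → Fin n, (∀ i, j i ∈ t i) ∧ μ = ∑ i, Finsupp.single (j i) 1}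

/-- `a` dominates one of the canonical generators. -/
def Dom (a : Fin n →₀ ℕ) : Prop := ∃ μ ∈ Egen t, μ ≤ a

/-- The Hall-type counting condition. -/
def Hall (a : Fin n →₀ ℕ) : Prop := ∀ U : Finset ι, U.card ≤ sig (U.biUnion t) a

variable {t}

lemma hall_of_dom {a : Fin n →₀ ℕ} (h : Dom t a) : Hall t a := by
  obtain ⟨μ, ⟨j, hj, rfl⟩, hle⟩ := h
  intro U
  refine le_trans ?_ (sig_mono_exp hle _)
  rw [sig_finsum]
  calc U.card = ∑ i ∈ U, 1 := by simp
    _ ≤ ∑ i ∈ U, sig (U.biUnion t) (Finsupp.single (j i) 1) := by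
        refine Finset.sum_le_sum fun i hi => ?_
        rw [sig_single, if_pos (Finset.mem_biUnion.mpr ⟨i, hi, hj i⟩)]
    _ ≤ ∑ i, sig (U.biUnion t) (Finsupp.single (j i) 1) := by
        exact Finset.sum_le_sum_of_subset (Finset.subset_univ U)

lemma dom_of_hall {a : Fin n →₀ ℕ} (h : Hall t a) : Dom t a := by
  classical
  set T : ι → Finset ((_ : Fin n) × ℕ) := fun i => (t i).sigma fun j => Finset.range (a j) with hT
  have hbiU : ∀ S : Finset ι, S.biUnion T = (S.biUnion t).sigma fun j => Finset.range (a j) := by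
    intro S; ext ⟨j, r⟩
    simp only [Finset.mem_biUnion, Finset.mem_sigma, hT]
    tauto
  have hcard : ∀ S : Finset ι, S.card ≤ (S.biUnion T).card := by
    intro S
    rw [hbiU, Finset.card_sigma]
    simpa [sig] using h S
  obtain ⟨f, hfinj, hfmem⟩ := (Finset.all_card_le_biUnion_card_iff_exists_injective T).mp hcard
  refine ⟨∑ i, Finsupp.single ((f i).1) 1, ⟨fun i => (f i).1,
    fun i => (Finset.mem_sigma.mp (hfmem i)).1, rfl⟩, ?_⟩
  rw [Finsupp.le_def]
  intro l
  have hsum : (∑ i, Finsupp.single ((f i).1) 1) l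
      = (Finset.univ.filter fun i => (f i).1 = l).card := by
    rw [Finsupp.finset_sum_apply, Finset.card_filter]
    refine Finset.sum_congr rfl fun i _ => ?_
    simp [Finsupp.single_apply]
  rw [hsum]
  refine le_trans (Finset.card_le_card_of_injOn (fun i => (f i).2)
    (t := Finset.range (a l)) ?_ ?_) (le_of_eq (Finset.card_range (a l)))
  · intro i hi
    rw [Finset.mem_coe, Finset.mem_filter] at hi
    have := (Finset.mem_sigma.mp (hfmem i)).2
    rw [Finset.mem_range] at this; rw [Finset.mem_coe, Finset.mem_range]
    rwa [hi.2] at this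
  · intro i hi i' hi' heq
    rw [Finset.mem_coe, Finset.mem_filter] at hi hi'
    apply hfinj
    exact Sigma.ext (hi.2.trans hi'.2.symm) (heq_of_eq heq)

lemma dom_iff_hall {a : Fin n →₀ ℕ} : Dom t a ↔ Hall t a :=
  ⟨hall_of_dom, dom_of_hall⟩



set_option linter.unusedSectionVars false
variable {n : ℕ} {K : Type*} [Field K] {ι : Type*} [Fintype ι] [DecidableEq ι]

local notation "R" => MvPolynomial (Fin n) K

/-- monomial prime ideal attached to a set of variables -/
noncomputable def PB (A : Finset (Fin n)) : Ideal R :=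
  Ideal.span ((fun j => (X j : R)) '' (A : Set (Fin n)))

noncomputable def mIdeal (t : ι → Finset (Fin n)) : Ideal R := ∏ i, PB (t i)

lemma span_image_mul (S T : Set (Fin n →₀ ℕ)) :
    Ideal.span ((fun μ => (monomial μ (1 : K))) '' S) *
      Ideal.span ((fun μ => (monomial μ (1 : K))) '' T) =
      Ideal.span ((fun μ => (monomial μ (1 : K))) '' (S + T)) := by
  rw [Ideal.span_mul_span']
  congr 1
  ext f
  constructor
  · rintro ⟨-, ⟨a, ha, rfl⟩, -, ⟨b, hb, rfl⟩, rfl⟩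
    exact ⟨a + b, Set.add_mem_add ha hb, by simp [monomial_mul]⟩
  · rintro ⟨-, ⟨a, ha, b, hb, rfl⟩, rfl⟩
    exact ⟨monomial a 1, ⟨a, ha, rfl⟩, monomial b 1, ⟨b, hb, rfl⟩,
      by simp [monomial_mul]⟩

lemma prod_span_image (s : Finset ι) (S : ι → Set (Fin n →₀ ℕ)) :
    ∏ i ∈ s, Ideal.span ((fun μ => (monomial μ (1 : K))) '' S i) =
      Ideal.span ((fun μ => (monomial μ (1 : K))) '' (∑ i ∈ s, S i)) := by
  classical
  induction s using Finset.induction with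
  | empty =>
      simp only [Finset.prod_empty, Finset.sum_empty]
      have : ((fun μ => (monomial μ (1 : K))) '' (0 : Set (Fin n →₀ ℕ))) = {1} := by
        ext f
        simp only [Set.mem_image, Set.mem_zero, Set.mem_singleton_iff]
        constructor
        · rintro ⟨μ, rfl, rfl⟩; simp [monomial_zero']
        · rintro rfl; exact ⟨0, rfl, by simp [monomial_zero']⟩
      rw [this, Ideal.span_singleton_one, Ideal.one_eq_top]
  | insert _ _ h ih =>
      rw [Finset.prod_insert h, Finset.sum_insert h, ih, span_image_mul]

lemma PB_eq_span_monomial (A : Finset (Fin n)) :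
    PB A = Ideal.span ((fun μ => (monomial μ (1 : K))) ''
      ((fun j => Finsupp.single j 1) '' (A : Set (Fin n)))) := by
  have hX : ∀ j : Fin n, (X j : R) = monomial (Finsupp.single j 1) 1 := fun j => by
    rw [← pow_one (X j : R), X_pow_eq_monomial]
  rw [PB, Set.image_image]
  simp_rw [hX]

lemma mIdeal_eq_span (t : ι → Finset (Fin n)) :
    mIdeal t = Ideal.span ((fun μ => (monomial μ (1 : K))) '' Egen t) := by
  rw [mIdeal]
  have h1 : ∀ i : ι, PB (t i) = Ideal.span ((fun μ => (monomial μ (1 : K))) ''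
      ((fun j => Finsupp.single j 1) '' ((t i : Set (Fin n))))) := fun i =>
    PB_eq_span_monomial (t i)
  simp_rw [h1]
  rw [show (Finset.univ : Finset ι).prod (fun i => Ideal.span
      ((fun μ => (monomial μ (1 : K))) '' ((fun j => Finsupp.single j 1) '' (t i : Set (Fin n)))))
      = _ from prod_span_image Finset.univ _]
  congr 1
  apply congrArg
  ext μ
  rw [Set.mem_finset_sum]
  constructor
  · rintro ⟨g, hg, rfl⟩
    have : ∀ i : ι, ∃ j, j ∈ t i ∧ g i = Finsupp.single j 1 := by
      intro i
      obtain ⟨j, hj, hji⟩ := hg (Finset.mem_univ i)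
      exact ⟨j, hj, hji.symm⟩
    choose j hj hgj using this
    exact ⟨j, hj, by rw [funext hgj]⟩
  · rintro ⟨j, hj, rfl⟩
    exact ⟨fun i => Finsupp.single (j i) 1, fun {i} _ => ⟨j i, hj i, rfl⟩, rfl⟩

lemma mem_mIdeal_iff (t : ι → Finset (Fin n)) (f : R) :
    f ∈ mIdeal t ↔ ∀ b ∈ f.support, Dom t b := by
  rw [mIdeal_eq_span, mem_ideal_span_monomial_image]
  rfl

lemma mono_mem_mIdeal_iff (t : ι → Finset (Fin n)) (b : Fin n →₀ ℕ) :
    (monomial b (1 : K)) ∈ mIdeal t ↔ Dom t b := by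
  classical
  rw [mem_mIdeal_iff, support_monomial, if_neg (one_ne_zero)]
  simp

lemma PB_pow_eq (A : Finset (Fin n)) (w : ℕ) :
    (PB A : Ideal R) ^ w = mIdeal (fun _ : Fin w => A) := by
  rw [mIdeal, Finset.prod_const, Finset.card_univ, Fintype.card_fin]

lemma dom_const_iff {A : Finset (Fin n)} {w : ℕ} {b : Fin n →₀ ℕ} :
    Dom (fun _ : Fin w => A) b ↔ w ≤ sig A b := by
  constructor
  · rintro ⟨μ, ⟨j, hj, rfl⟩, hle⟩
    refine le_trans ?_ (sig_mono_exp hle A)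
    rw [sig_finsum]
    calc w = ∑ _i : Fin w, 1 := by simp
      _ ≤ _ := Finset.sum_le_sum fun i _ => by
          rw [sig_single, if_pos (hj i)]
  · intro hw
    apply dom_of_hall
    intro U
    rcases U.eq_empty_or_nonempty with rfl | hU
    · simp
    · have : U.biUnion (fun _ : Fin w => A) = A := by
        obtain ⟨i, hi⟩ := hU
        ext j; simp only [Finset.mem_biUnion]; exact ⟨fun ⟨_, _, h⟩ => h, fun h => ⟨i, hi, h⟩⟩
      rw [this]
      exact le_trans (le_trans (Finset.card_le_univ U) (by simp)) hw

lemma mem_PB_pow_iff (A : Finset (Fin n)) (w : ℕ) (f : R) :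
    f ∈ (PB A : Ideal R) ^ w ↔ ∀ b ∈ f.support, w ≤ sig A b := by
  rw [PB_pow_eq, mem_mIdeal_iff]
  exact forall₂_congr fun b _ => dom_const_iff

lemma mem_PB_iff (A : Finset (Fin n)) (f : R) :
    f ∈ (PB A : Ideal R) ↔ ∀ b ∈ f.support, 1 ≤ sig A b := by
  rw [← pow_one (PB A : Ideal R)]
  exact mem_PB_pow_iff A 1 f




/-- Homomorphism tagging the `A`-degree in an auxiliary polynomial variable. -/
noncomputable def phi (A : Finset (Fin n)) : MvPolynomial (Fin n) K →ₐ[K] Polynomial (MvPolynomial (Fin n) K) :=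
  aeval fun l => if l ∈ A then Polynomial.C (X l) * Polynomial.X else Polynomial.C (X l)

lemma sig_eq_sum_support (A : Finset (Fin n)) (b : Fin n →₀ ℕ) :
    sig A b = ∑ l ∈ b.support, if l ∈ A then b l else 0 := by
  classical
  rw [Finset.sum_ite_mem, sig]
  refine (Finset.sum_subset Finset.inter_subset_right fun j hjA hj => ?_).symm
  by_contra h
  exact hj (Finset.mem_inter.mpr ⟨Finsupp.mem_support_iff.mpr h, hjA⟩)

lemma phi_monomial (A : Finset (Fin n)) (b : Fin n →₀ ℕ) (c : K) :
    phi A (monomial b c) = Polynomial.C (monomial b c) * Polynomial.X ^ (sig A b) := by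
  classical
  simp only [phi]
  rw [aeval_monomial]
  have hsplit : ∀ l ∈ b.support,
      (if l ∈ A then Polynomial.C (X l : MvPolynomial (Fin n) K) * Polynomial.X
        else Polynomial.C (X l)) ^ b l
        = Polynomial.C ((X l : MvPolynomial (Fin n) K) ^ b l)
            * Polynomial.X ^ (if l ∈ A then b l else 0) := by
    intro l _
    by_cases hl : l ∈ A
    · rw [if_pos hl, if_pos hl, mul_pow, Polynomial.C_pow]
    · rw [if_neg hl, if_neg hl, pow_zero, mul_one, Polynomial.C_pow]
  rw [Finsupp.prod, Finset.prod_congr rfl hsplit, Finset.prod_mul_distrib,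
    ← map_prod, Finset.prod_pow_eq_pow_sum, ← sig_eq_sum_support]
  have halg : (algebraMap K (Polynomial (MvPolynomial (Fin n) K))) c
      = Polynomial.C (MvPolynomial.C c) := rfl
  rw [halg, ← mul_assoc, ← Polynomial.C_mul]
  congr 2
  rw [monomial_eq, Finsupp.prod]

lemma mem_PB_pow_iff_dvd (A : Finset (Fin n)) (w : ℕ) (f : MvPolynomial (Fin n) K) :
    f ∈ (PB A : Ideal (MvPolynomial (Fin n) K)) ^ w ↔ Polynomial.X ^ w ∣ phi A f := by
  rw [mem_PB_pow_iff]
  constructor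
  · intro h
    have hrep : f = ∑ b ∈ f.support, monomial b (coeff b f) := (support_sum_monomial_coeff f).symm
    rw [hrep, map_sum]
    refine Finset.dvd_sum fun b hb => ?_
    rw [phi_monomial]
    exact Dvd.dvd.mul_left (pow_dvd_pow _ (h b hb)) _
  · intro h b hb
    by_contra hlt
    push_neg at hlt
    have hc0 : (phi A f).coeff (sig A b) = 0 :=
      Polynomial.X_pow_dvd_iff.mp h _ hlt
    have hrep : f = ∑ b ∈ f.support, monomial b (coeff b f) := (support_sum_monomial_coeff f).symm
    have hco : (phi A f).coeff (sig A b)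
        = ∑ b' ∈ f.support, if sig A b = sig A b' then monomial b' (coeff b' f) else 0 := by
      conv_lhs => rw [hrep]
      rw [map_sum, Polynomial.finset_sum_coeff]
      refine Finset.sum_congr rfl fun b' _ => ?_
      rw [phi_monomial, Polynomial.coeff_C_mul, Polynomial.coeff_X_pow]
      by_cases hq : sig A b = sig A b' <;> simp [hq]
    rw [hco] at hc0
    have hcb := congrArg (coeff b) hc0
    rw [coeff_sum] at hcb
    simp only [coeff_zero] at hcb
    rw [Finset.sum_eq_single b] at hcb
    · rw [if_pos rfl, coeff_monomial, if_pos rfl] at hcb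
      exact (Finsupp.mem_support_iff.mp hb) hcb
    · intro b' _ hne
      by_cases hq : sig A b = sig A b'
      · rw [if_pos hq, coeff_monomial, if_neg hne]
      · rw [if_neg hq, coeff_zero]
    · intro hbn; exact absurd hb hbn

lemma isPrime_PB (A : Finset (Fin n)) : (PB A : Ideal (MvPolynomial (Fin n) K)).IsPrime := by
  constructor
  · intro htop
    have h1 : (1 : MvPolynomial (Fin n) K) ∈ (PB A : Ideal (MvPolynomial (Fin n) K)) :=
      htop ▸ Submodule.mem_top
    rw [mem_PB_iff] at h1
    have := h1 0 (by simp [mem_support_iff])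
    simp [sig] at this
  · intro f g hfg
    have hX : Prime (Polynomial.X : Polynomial (MvPolynomial (Fin n) K)) := Polynomial.prime_X
    have hdv : Polynomial.X ∣ phi A (f * g) := by
      rw [← pow_one (PB A : Ideal (MvPolynomial (Fin n) K)), mem_PB_pow_iff_dvd, pow_one] at hfg
      exact hfg
    rw [map_mul] at hdv
    rcases hX.2.2 _ _ hdv with h | h
    · left
      rw [← pow_one (PB A : Ideal (MvPolynomial (Fin n) K)), mem_PB_pow_iff_dvd, pow_one]
      exact h
    · right
      rw [← pow_one (PB A : Ideal (MvPolynomial (Fin n) K)), mem_PB_pow_iff_dvd, pow_one]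
      exact h

lemma PB_pow_quasi_primary {A : Finset (Fin n)} {w : ℕ} {r f : MvPolynomial (Fin n) K}
    (h : r * f ∈ (PB A : Ideal (MvPolynomial (Fin n) K)) ^ w)
    (hr : r ∉ (PB A : Ideal (MvPolynomial (Fin n) K))) :
    f ∈ (PB A : Ideal (MvPolynomial (Fin n) K)) ^ w := by
  rw [mem_PB_pow_iff_dvd] at h ⊢
  rw [map_mul] at h
  refine (Polynomial.prime_X).pow_dvd_of_dvd_mul_left _ ?_ h
  intro hdvd
  exact hr (by
    rw [← pow_one (PB A : Ideal (MvPolynomial (Fin n) K)), mem_PB_pow_iff_dvd, pow_one]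
    exact hdvd)



/-! ### Weights, decomposition, associated primes of the transversal ideal -/

variable (t : ι → Finset (Fin n))

/-- The set of factors whose support is inside `A`. -/
def Wset (A : Finset (Fin n)) : Finset ι := Finset.univ.filter fun i => t i ⊆ A

lemma prod_le_pow {J : Ideal (MvPolynomial (Fin n) K)} (s : Finset ι)
    (f : ι → Ideal (MvPolynomial (Fin n) K)) (h : ∀ i ∈ s, f i ≤ J) :
    ∏ i ∈ s, f i ≤ J ^ s.card := by
  classical
  induction s using Finset.induction with
  | empty => simp
  | @insert a s ha ih =>
      rw [Finset.prod_insert ha, Finset.card_insert_of_notMem ha, pow_succ, mul_comm (J ^ s.card)]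
      exact Ideal.mul_mono (h a (Finset.mem_insert_self a s))
        (ih fun i hi => h i (Finset.mem_insert_of_mem hi))

lemma PB_mono {A B : Finset (Fin n)} (h : A ⊆ B) :
    (PB A : Ideal (MvPolynomial (Fin n) K)) ≤ PB B :=
  Ideal.span_mono (Set.image_mono (Finset.coe_subset.mpr h))

lemma mIdeal_le_PB_pow (A : Finset (Fin n)) :
    mIdeal t ≤ (PB A : Ideal (MvPolynomial (Fin n) K)) ^ (Wset t A).card := by
  classical
  rw [mIdeal, ← Finset.prod_filter_mul_prod_filter_not Finset.univ (fun i => t i ⊆ A)]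
  refine le_trans Ideal.mul_le_left ?_
  exact prod_le_pow _ _ fun i hi => PB_mono (Finset.mem_filter.mp hi).2

lemma mIdeal_decomp :
    mIdeal t = (Finset.univ : Finset (Finset (Fin n))).inf
      fun A => (PB A : Ideal (MvPolynomial (Fin n) K)) ^ (Wset t A).card := by
  classical
  refine le_antisymm (Finset.le_inf fun A _ => mIdeal_le_PB_pow t A) ?_
  intro f hf
  rw [mem_mIdeal_iff]
  intro b hb
  refine dom_of_hall fun U => ?_
  have hle : (Finset.univ : Finset (Finset (Fin n))).inf
      (fun A => (PB A : Ideal (MvPolynomial (Fin n) K)) ^ (Wset t A).card)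
      ≤ (PB (U.biUnion t) : Ideal (MvPolynomial (Fin n) K)) ^ (Wset t (U.biUnion t)).card :=
    Finset.inf_le (Finset.mem_univ (U.biUnion t))
  have hmem := hle hf
  rw [mem_PB_pow_iff] at hmem
  refine le_trans (Finset.card_le_card fun i hi => ?_) (le_trans (hmem b hb) le_rfl)
  exact Finset.mem_filter.mpr ⟨Finset.mem_univ i, fun j hj => Finset.mem_biUnion.mpr ⟨i, hi, hj⟩⟩

lemma prime_of_finset_inf {p : Ideal (MvPolynomial (Fin n) K)} (hp : p.IsPrime)
    {β : Type*} [DecidableEq β] (s : Finset β) (f : β → Ideal (MvPolynomial (Fin n) K))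
    (h : s.inf f = p) : ∃ b ∈ s, f b = p := by
  classical
  induction s using Finset.induction with
  | empty =>
      rw [Finset.inf_empty] at h
      exact absurd h.symm hp.ne_top
  | @insert a s ha ih =>
      rw [Finset.inf_insert] at h
      have hmul : f a * s.inf f ≤ p := h ▸ Ideal.mul_le_inf
      rcases hp.mul_le.mp hmul with hle | hle
      · exact ⟨a, Finset.mem_insert_self a s,
          le_antisymm hle (h ▸ inf_le_left)⟩
      · obtain ⟨b, hb, hfb⟩ := ih (le_antisymm hle (h ▸ inf_le_right))
        exact ⟨b, Finset.mem_insert_of_mem hb, hfb⟩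

/-- Associated primes of `R ⧸ J` are exactly primes of the form `J : (f)`. -/
lemma mem_ass_iff {J p : Ideal (MvPolynomial (Fin n) K)} :
    p ∈ associatedPrimes (MvPolynomial (Fin n) K) (MvPolynomial (Fin n) K ⧸ J) ↔
      p.IsPrime ∧ ∃ f : MvPolynomial (Fin n) K, J.colon (Ideal.span {f}) = p := by
  have key : ∀ f : MvPolynomial (Fin n) K,
      (⊥ : Submodule (MvPolynomial (Fin n) K) (MvPolynomial (Fin n) K ⧸ J)).colon
        {((Ideal.Quotient.mk J) f)} = J.colon (Ideal.span {f}) := by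
    intro f
    ext r
    rw [Submodule.mem_colon_singleton, Submodule.mem_bot, Ideal.mem_colon_span_singleton]
    have hsm : r • (Ideal.Quotient.mk J) f = (Ideal.Quotient.mk J) (r * f) := by
      rw [← smul_eq_mul]
      exact (Submodule.Quotient.mk_smul J r f).symm
    rw [hsm, Ideal.Quotient.eq_zero_iff_mem]
  rw [AssociatedPrimes.mem_iff, isAssociatedPrime_iff]
  constructor
  · rintro ⟨hp, x, hx⟩
    obtain ⟨f, rfl⟩ := Ideal.Quotient.mk_surjective x
    exact ⟨hp, f, by rw [← key f, hx]⟩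
  · rintro ⟨hp, f, hf⟩
    exact ⟨hp, Ideal.Quotient.mk J f, by rw [key f, hf]⟩

lemma colon_finset_inf {β : Type*} [DecidableEq β] (s : Finset β)
    (g : β → Ideal (MvPolynomial (Fin n) K)) (f : MvPolynomial (Fin n) K) :
    (s.inf g).colon (Ideal.span {f}) = s.inf fun b => (g b).colon (Ideal.span {f}) := by
  ext r
  simp only [Ideal.mem_colon_span_singleton, Submodule.mem_finsetInf]



/-! ### Colon characterization of associated primes -/

lemma mul_mono_mem_iff (g : MvPolynomial (Fin n) K) (a : Fin n →₀ ℕ) :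
    g * monomial a 1 ∈ mIdeal t ↔ ∀ b ∈ g.support, Dom t (a + b) := by
  constructor
  · intro h b hb
    rw [mem_mIdeal_iff] at h
    have hmem : a + b ∈ (g * monomial a 1).support := by
      rw [mem_support_iff, mul_comm, coeff_monomial_mul']
      rw [if_pos (by
        rw [Finsupp.le_def]; intro j; simp [Nat.le_add_right] : a ≤ a + b)]
      rw [add_tsub_cancel_left, one_mul]
      exact Finsupp.mem_support_iff.mp hb
    exact h _ hmem
  · intro h
    have hrep : g = ∑ b ∈ g.support, monomial b (coeff b g) := (support_sum_monomial_coeff g).symm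
    rw [hrep, Finset.sum_mul]
    refine Ideal.sum_mem _ fun b hb => ?_
    have : (monomial b (coeff b g)) * monomial a 1 = C (coeff b g) * monomial (a + b) 1 := by
      rw [monomial_mul, C_mul_monomial, mul_one, add_comm b a]
    rw [this]
    exact Ideal.mul_mem_left _ _ ((mono_mem_mIdeal_iff t _).mpr (h b hb))

lemma colon_mono_eq_PB_iff (a : Fin n →₀ ℕ) (A : Finset (Fin n)) :
    (mIdeal t).colon (Ideal.span {(monomial a 1 : MvPolynomial (Fin n) K)} : Set (MvPolynomial (Fin n) K)) = PB A ↔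
      (∀ l ∈ A, Dom t (a + Finsupp.single l 1)) ∧
        (∀ b : Fin n →₀ ℕ, Dom t (a + b) → ∃ l ∈ A, b l ≠ 0) := by
  constructor
  · intro h
    constructor
    · intro l hl
      have hX : (X l : MvPolynomial (Fin n) K) ∈ PB A :=
        Ideal.subset_span ⟨l, hl, rfl⟩
      rw [← h, Ideal.mem_colon_span_singleton] at hX
      have : (X l : MvPolynomial (Fin n) K) * monomial a 1 = monomial (a + Finsupp.single l 1) 1 := by
        rw [X, monomial_mul, one_mul, add_comm]
      rw [this, mono_mem_mIdeal_iff] at hX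
      exact hX
    · intro b hb
      have hmem : (monomial b 1 : MvPolynomial (Fin n) K) ∈ PB A := by
        rw [← h, Ideal.mem_colon_span_singleton]
        rw [mul_mono_mem_iff]
        intro b' hb'
        classical
        rw [support_monomial, if_neg one_ne_zero, Finset.mem_singleton] at hb'
        rwa [hb']
      rw [mem_PB_iff] at hmem
      classical
      have := hmem b (by rw [support_monomial, if_neg one_ne_zero]; exact Finset.mem_singleton_self b)
      rwa [one_le_sig_iff] at this
  · rintro ⟨h1, h2⟩
    refine le_antisymm ?_ ?_
    · intro r hr
      rw [Ideal.mem_colon_span_singleton, mul_mono_mem_iff] at hr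
      rw [mem_PB_iff]
      intro b hb
      rw [one_le_sig_iff]
      exact h2 b (hr b hb)
    · rw [PB, Ideal.span_le]
      rintro - ⟨l, hl, rfl⟩
      rw [SetLike.mem_coe, Ideal.mem_colon_span_singleton]
      have : (X l : MvPolynomial (Fin n) K) * monomial a 1 = monomial (a + Finsupp.single l 1) 1 := by
        rw [X, monomial_mul, one_mul, add_comm]
      rw [this, mono_mem_mIdeal_iff]
      exact h1 l hl

theorem ass_mem_iff_CC (p : Ideal (MvPolynomial (Fin n) K)) :
    p ∈ associatedPrimes (MvPolynomial (Fin n) K) (MvPolynomial (Fin n) K ⧸ mIdeal t) ↔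
      ∃ A : Finset (Fin n), p = PB A ∧ ∃ a : Fin n →₀ ℕ,
        (∀ l ∈ A, Dom t (a + Finsupp.single l 1)) ∧
          (∀ b : Fin n →₀ ℕ, Dom t (a + b) → ∃ l ∈ A, b l ≠ 0) := by
  classical
  constructor
  · intro hp
    obtain ⟨hprime, f, hf⟩ := mem_ass_iff.mp hp
    -- p is one of the colon ideals of the primary decomposition
    have hdec : ((Finset.univ : Finset (Finset (Fin n))).inf
        fun A => ((PB A : Ideal (MvPolynomial (Fin n) K)) ^ (Wset t A).card).colon
          (Ideal.span {f})) = p := by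
      rw [← colon_finset_inf, ← mIdeal_decomp, hf]
    obtain ⟨A, -, hA⟩ := prime_of_finset_inf hprime _ _ hdec
    set w := (Wset t A).card with hw
    -- the exponent w is positive and f ∉ PB A ^ w
    have hfw : f ∉ (PB A : Ideal (MvPolynomial (Fin n) K)) ^ w := by
      intro hmem
      have : ((PB A : Ideal (MvPolynomial (Fin n) K)) ^ w).colon (Ideal.span {f}) = ⊤ := by
        rw [Ideal.eq_top_iff_one, Ideal.mem_colon_span_singleton, one_mul]
        exact hmem
      exact hprime.ne_top (by rw [← hA, this])
    -- p = PB A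
    have hpPB : p = PB A := by
      refine le_antisymm ?_ ?_
      · intro r hr
        by_contra hrA
        exact hfw (PB_pow_quasi_primary (Ideal.mem_colon_span_singleton.mp (hA ▸ hr)) hrA)
      · rw [PB, Ideal.span_le]
        rintro - ⟨l, hl, rfl⟩
        rw [SetLike.mem_coe]
        have hXw : (X l : MvPolynomial (Fin n) K) ^ w ∈ p := by
          rw [← hA, Ideal.mem_colon_span_singleton]
          have hXl : (X l : MvPolynomial (Fin n) K) ∈ PB A := Ideal.subset_span ⟨l, hl, rfl⟩
          exact Ideal.mul_mem_right _ _ (Ideal.pow_mem_pow hXl w)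
        by_cases hw0 : w = 0
        · -- then PB A ^ w = ⊤ and colon is ⊤, contradicting primality
          exfalso
          apply hprime.ne_top
          rw [← hA, hw0, pow_zero, Ideal.one_eq_top, Ideal.eq_top_iff_one,
            Ideal.mem_colon_span_singleton, one_mul]
          exact Submodule.mem_top
        · exact hprime.mem_of_pow_mem _ hXw
    -- f ∉ mIdeal t, and f ≠ 0
    have hfI : f ∉ mIdeal t := by
      intro hmem
      apply hprime.ne_top
      rw [← hf, Ideal.eq_top_iff_one, Ideal.mem_colon_span_singleton, one_mul]
      exact hmem
    have hf0 : f ≠ 0 := fun h0 => hfI (h0 ▸ (Submodule.zero_mem _))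
    -- monomial witness: each term of f gives a colon ideal sandwiched around p
    have hub : ∀ b ∈ f.support,
        PB A ≤ (mIdeal t).colon (Ideal.span {(monomial b 1 : MvPolynomial (Fin n) K)} : Set (MvPolynomial (Fin n) K)) := by
      intro b hb
      rw [PB, Ideal.span_le]
      rintro - ⟨l, hl, rfl⟩
      rw [SetLike.mem_coe, Ideal.mem_colon_span_singleton]
      have hXlp : (X l : MvPolynomial (Fin n) K) ∈ p := by
        rw [hpPB]
        exact Ideal.subset_span ⟨l, hl, rfl⟩
      have hXf : (X l : MvPolynomial (Fin n) K) * f ∈ mIdeal t := by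
        rw [← hf] at hXlp
        exact Ideal.mem_colon_span_singleton.mp hXlp
      have : (X l : MvPolynomial (Fin n) K) * f = f * monomial (Finsupp.single l 1) 1 := by
        rw [mul_comm, X]
      rw [this, mul_mono_mem_iff] at hXf
      have : (X l : MvPolynomial (Fin n) K) * monomial b 1
          = monomial b 1 * monomial (Finsupp.single l 1) 1 := by
        rw [mul_comm, X]
      rw [this, mul_mono_mem_iff]
      intro b' hb'
      classical
      rw [support_monomial, if_neg one_ne_zero, Finset.mem_singleton] at hb'
      rw [hb']
      exact hXf b hb
    have hlb : (f.support.inf fun b =>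
        (mIdeal t).colon (Ideal.span {(monomial b 1 : MvPolynomial (Fin n) K)} : Set (MvPolynomial (Fin n) K))) ≤ p := by
      rw [← hf]
      intro r hr
      rw [Ideal.mem_colon_span_singleton]
      have hrb : ∀ b ∈ f.support, r * monomial b 1 ∈ mIdeal t := by
        intro b hb
        have hle : (f.support.inf fun b =>
            (mIdeal t).colon (Ideal.span {(monomial b 1 : MvPolynomial (Fin n) K)} : Set (MvPolynomial (Fin n) K)))
            ≤ (mIdeal t).colon (Ideal.span {(monomial b 1 : MvPolynomial (Fin n) K)} : Set (MvPolynomial (Fin n) K)) :=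
          Finset.inf_le hb
        exact Ideal.mem_colon_span_singleton.mp (hle hr)
      have hrep : f = ∑ b ∈ f.support, monomial b (coeff b f) := (support_sum_monomial_coeff f).symm
      rw [hrep, Finset.mul_sum]
      refine Ideal.sum_mem _ fun b hb => ?_
      have : r * monomial b (coeff b f) = C (coeff b f) * (r * monomial b 1) := by
        rw [show (monomial b (coeff b f) : MvPolynomial (Fin n) K)
            = C (coeff b f) * monomial b 1 by rw [C_mul_monomial, mul_one]]
        ring
      rw [this]
      exact Ideal.mul_mem_left _ _ (hrb b hb)
    have hinf : (f.support.inf fun b =>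
        (mIdeal t).colon (Ideal.span {(monomial b 1 : MvPolynomial (Fin n) K)} : Set (MvPolynomial (Fin n) K))) = p := by
      refine le_antisymm hlb (Finset.le_inf fun b hb => ?_)
      rw [hpPB]
      exact hub b hb
    obtain ⟨b, hb, hcolon⟩ := prime_of_finset_inf hprime _ _ hinf
    refine ⟨A, hpPB, b, ?_⟩
    rw [← colon_mono_eq_PB_iff (K := K) t b A, hcolon, hpPB]
  · rintro ⟨A, rfl, a, h1, h2⟩
    rw [mem_ass_iff]
    exact ⟨isPrime_PB A, monomial a 1, (colon_mono_eq_PB_iff t a A).mpr ⟨h1, h2⟩⟩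



/-! ### The combinatorial heart -/

/-- The combinatorial condition characterizing `PB A ∈ Ass(R/I_t)`. -/
def HC (t : ι → Finset (Fin n)) (A : Finset (Fin n)) : Prop :=
  ∃ a : Fin n →₀ ℕ, (∀ l ∈ A, Hall t (a + Finsupp.single l 1)) ∧
    (∀ b : Fin n →₀ ℕ, Hall t (a + b) → ∃ l ∈ A, b l ≠ 0)

def Feas (t : ι → Finset (Fin n)) (A : Finset (Fin n)) (k : ℕ) : Prop :=
  ∃ α : Fin n →₀ ℕ, sig A α + 1 = k * (Wset t A).card ∧
    ∀ U ⊆ Wset t A, U.biUnion t ≠ A → k * U.card ≤ sig (U.biUnion t) α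

def NoSplit (t : ι → Finset (Fin n)) (A : Finset (Fin n)) : Prop :=
  ∀ U₁ U₂ : Finset ι, U₁ ∪ U₂ = Wset t A → Disjoint U₁ U₂ → U₁.Nonempty → U₂.Nonempty →
    ¬ Disjoint (U₁.biUnion t) (U₂.biUnion t)

/-- the exponent vector with value `N` on every variable in `s` -/
noncomputable def unif (s : Finset (Fin n)) (N : ℕ) : Fin n →₀ ℕ := ∑ j ∈ s, Finsupp.single j N

lemma unif_apply (s : Finset (Fin n)) (N : ℕ) (l : Fin n) :
    unif s N l = if l ∈ s then N else 0 := by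
  classical
  rw [unif, Finsupp.finset_sum_apply]
  rw [show (∑ j ∈ s, Finsupp.single j N l) = ∑ j ∈ s, if j = l then N else 0 from
    Finset.sum_congr rfl fun j _ => Finsupp.single_apply]
  rw [Finset.sum_ite_eq' s l fun _ => N]

lemma sig_unif_zero {s B : Finset (Fin n)} (N : ℕ) (h : ∀ l ∈ B, l ∉ s) :
    sig B (unif s N) = 0 := by
  rw [sig]
  refine Finset.sum_eq_zero fun l hl => ?_
  rw [unif_apply, if_neg (h l hl)]

lemma sig_unif_ge {s B : Finset (Fin n)} {N : ℕ} {j0 : Fin n} (h1 : j0 ∈ B) (h2 : j0 ∈ s) :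
    N ≤ sig B (unif s N) := by
  calc N = unif s N j0 := by rw [unif_apply, if_pos h2]
    _ ≤ sig B (unif s N) := Finset.single_le_sum (fun l _ => Nat.zero_le _) h1

lemma hall_nonempty (t : ι → Finset (Fin n)) (ht : ∀ i, (t i).Nonempty) (a : Fin n →₀ ℕ) :
    Hall t (a + unif Finset.univ (Fintype.card ι)) := by
  intro U
  rcases U.eq_empty_or_nonempty with rfl | ⟨i, hi⟩
  · simp
  · obtain ⟨j0, hj0⟩ := ht i
    have hj0B : j0 ∈ U.biUnion t := Finset.mem_biUnion.mpr ⟨i, hi, hj0⟩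
    calc U.card ≤ Fintype.card ι := Finset.card_le_univ U
      _ ≤ sig (U.biUnion t) (unif Finset.univ (Fintype.card ι)) :=
          sig_unif_ge hj0B (Finset.mem_univ j0)
      _ ≤ sig (U.biUnion t) (a + unif Finset.univ (Fintype.card ι)) := by
          rw [sig_add]; omega

/-- Forward direction : the combinatorial condition gives the normal form. -/
lemma HC_to_NF {t : ι → Finset (Fin n)} {A : Finset (Fin n)} (ht : ∀ i, (t i).Nonempty)
    (h : HC t A) : (Wset t A).biUnion t = A ∧ Feas t A 1 := by
  classical
  obtain ⟨a, h1, h2⟩ := h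
  -- A is nonempty
  have hAne : A.Nonempty := by
    obtain ⟨l, hl, -⟩ := h2 (unif Finset.univ (Fintype.card ι)) (hall_nonempty t ht a)
    exact ⟨l, hl⟩
  obtain ⟨l0, hl0⟩ := hAne
  -- failure of Hall for the outside vector
  have hfail : ¬ Hall t (a + unif Aᶜ (Fintype.card ι)) := by
    intro hh
    obtain ⟨l, hlA, hlne⟩ := h2 _ hh
    rw [unif_apply] at hlne
    simp [Finset.mem_compl, hlA] at hlne
  rw [Hall] at hfail
  push_neg at hfail
  obtain ⟨U₀, hU₀⟩ := hfail
  -- U₀'s support union is inside A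
  have hBU₀A : U₀.biUnion t ⊆ A := by
    intro j hj
    by_contra hjA
    have : Fintype.card ι ≤ sig (U₀.biUnion t) (a + unif Aᶜ (Fintype.card ι)) := by
      rw [sig_add]
      have := sig_unif_ge (s := Aᶜ) (N := Fintype.card ι) hj (Finset.mem_compl.mpr hjA)
      omega
    have := Finset.card_le_univ U₀
    omega
  have hsig0 : sig (U₀.biUnion t) (a + unif Aᶜ (Fintype.card ι)) = sig (U₀.biUnion t) a := by
    rw [sig_add, sig_unif_zero]
    · omega
    · intro l hl
      rw [Finset.mem_compl, not_not]
      exact hBU₀A hl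
  rw [hsig0] at hU₀
  -- from (1) at U₀ : A ⊆ BU₀ and the count is exactly #U₀ - 1
  have hABU₀ : A ⊆ U₀.biUnion t := by
    intro l hlA
    by_contra hlB
    have := h1 l hlA U₀
    rw [sig_add, sig_single, if_neg hlB] at this
    omega
  have hBU₀eq : U₀.biUnion t = A := le_antisymm hBU₀A hABU₀
  have hsigU₀ : sig A a + 1 = U₀.card := by
    have := h1 l0 hl0 U₀
    rw [sig_add, sig_single, if_pos (hABU₀ hl0), hBU₀eq] at this
    rw [hBU₀eq] at hU₀
    omega
  have hU₀W : U₀ ⊆ Wset t A := fun i hi =>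
    Finset.mem_filter.mpr ⟨Finset.mem_univ i,
      fun j hj => hBU₀eq ▸ Finset.mem_biUnion.mpr ⟨i, hi, hj⟩⟩
  -- the cover property
  have hcov : (Wset t A).biUnion t = A := by
    refine le_antisymm ?_ ?_
    · intro j hj
      obtain ⟨i, hi, hji⟩ := Finset.mem_biUnion.mp hj
      exact (Finset.mem_filter.mp hi).2 hji
    · intro j hj
      obtain ⟨i, hi, hji⟩ := Finset.mem_biUnion.mp (hABU₀ hj)
      exact Finset.mem_biUnion.mpr ⟨i, hU₀W hi, hji⟩
  -- counting : #U₀ = #W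
  have hWcard : sig A a + 1 = (Wset t A).card := by
    have hWle := h1 l0 hl0 (Wset t A)
    have hl0BW : l0 ∈ (Wset t A).biUnion t := by rw [hcov]; exact hl0
    rw [sig_add, sig_single, if_pos hl0BW, hcov] at hWle
    have hcle := Finset.card_le_card hU₀W
    omega
  refine ⟨hcov, a, by omega, ?_⟩
  intro U hUW hBU
  have hBUA : U.biUnion t ⊆ A := fun j hj => by
    obtain ⟨i, hi, hji⟩ := Finset.mem_biUnion.mp hj
    exact (Finset.mem_filter.mp (hUW hi)).2 hji
  obtain ⟨l, hlA, hlBU⟩ := Finset.exists_of_ssubset (lt_of_le_of_ne hBUA hBU)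
  have := h1 l hlA U
  rw [sig_add, sig_single, if_neg hlBU] at this
  omega

/-- Backward direction : the normal form gives the combinatorial condition. -/
lemma NF_to_HC {t : ι → Finset (Fin n)} {A : Finset (Fin n)}
    (hcov : (Wset t A).biUnion t = A) (hfeas : Feas t A 1) : HC t A := by
  classical
  obtain ⟨α, hs, hcon⟩ := hfeas
  refine ⟨α + unif Aᶜ (Fintype.card ι), ?_, ?_⟩
  · intro l hlA U
    by_cases hBUA : U.biUnion t ⊆ A
    · have hUW : U ⊆ Wset t A := fun i hi =>
        Finset.mem_filter.mpr ⟨Finset.mem_univ i,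
          fun j hj => hBUA (Finset.mem_biUnion.mpr ⟨i, hi, hj⟩)⟩
      have hz : sig (U.biUnion t) (unif Aᶜ (Fintype.card ι)) = 0 := by
        refine sig_unif_zero _ fun j hj => ?_
        rw [Finset.mem_compl, not_not]
        exact hBUA hj
      by_cases hBU : U.biUnion t = A
      · rw [add_assoc, sig_add, sig_add, hz, sig_single, hBU, if_pos hlA]
        have := Finset.card_le_card hUW
        rw [hBU] at *
        omega
      · have := hcon U hUW hBU
        rw [add_assoc, sig_add, sig_add, hz, sig_single]
        rw [one_mul] at this
        by_cases hlB : l ∈ U.biUnion t <;> simp [hlB] <;> omega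
    · obtain ⟨j, hjB, hjA⟩ := Finset.not_subset.mp hBUA
      have hge : Fintype.card ι ≤ sig (U.biUnion t) (unif Aᶜ (Fintype.card ι)) :=
        sig_unif_ge hjB (Finset.mem_compl.mpr hjA)
      have hle := Finset.card_le_univ U
      rw [add_assoc, sig_add, sig_add]
      omega
  · intro b hb
    by_contra hno
    push_neg at hno
    have hWle := hb (Wset t A)
    rw [hcov] at hWle
    have h1 : sig A (unif Aᶜ (Fintype.card ι)) = 0 :=
      sig_unif_zero _ fun l hl => by rw [Finset.mem_compl, not_not]; exact hl
    have h2 : sig A b = 0 := by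
      rw [sig]
      exact Finset.sum_eq_zero fun l hl => hno l hl
    rw [sig_add, sig_add, h1, h2] at hWle
    omega



/-! ### Feasibility is equivalent to connectivity, uniformly in the multiplicity -/

lemma Feas_to_NoSplit {t : ι → Finset (Fin n)} {A : Finset (Fin n)} {k : ℕ}
    (ht : ∀ i, (t i).Nonempty) (hcov : (Wset t A).biUnion t = A)
    (h : Feas t A k) : (Wset t A).Nonempty ∧ NoSplit t A := by
  classical
  obtain ⟨α, hs, hcon⟩ := h
  have hWne : (Wset t A).Nonempty := by
    rw [← Finset.card_pos]
    by_contra hc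
    push_neg at hc
    have h0 : (Wset t A).card = 0 := Nat.le_zero.mp hc
    rw [h0, Nat.mul_zero] at hs
    omega
  refine ⟨hWne, ?_⟩
  intro U₁ U₂ hunion hdisj hne₁ hne₂ hBdisj
  have hBne : ∀ (U : Finset ι), U.Nonempty → (U.biUnion t).Nonempty := by
    rintro U ⟨i, hi⟩
    obtain ⟨j, hj⟩ := ht i
    exact ⟨j, Finset.mem_biUnion.mpr ⟨i, hi, hj⟩⟩
  have hsub : ∀ (U : Finset ι), U ⊆ Wset t A → U.biUnion t ⊆ A := by
    intro U hU j hj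
    obtain ⟨i, hi, hji⟩ := Finset.mem_biUnion.mp hj
    exact (Finset.mem_filter.mp (hU hi)).2 hji
  have hU₁W : U₁ ⊆ Wset t A := hunion ▸ Finset.subset_union_left
  have hU₂W : U₂ ⊆ Wset t A := hunion ▸ Finset.subset_union_right
  have hBU₁ : U₁.biUnion t ≠ A := by
    intro hBA
    obtain ⟨j, hj⟩ := hBne U₂ hne₂
    exact (Finset.disjoint_left.mp hBdisj (hBA ▸ (hsub U₂ hU₂W hj)) hj)
  have hBU₂ : U₂.biUnion t ≠ A := by
    intro hBA
    obtain ⟨j, hj⟩ := hBne U₁ hne₁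
    exact (Finset.disjoint_left.mp hBdisj hj (hBA ▸ (hsub U₁ hU₁W hj)))
  have hc₁ := hcon U₁ hU₁W hBU₁
  have hc₂ := hcon U₂ hU₂W hBU₂
  have hBunion : (U₁ ∪ U₂).biUnion t = U₁.biUnion t ∪ U₂.biUnion t := by
    ext j
    simp only [Finset.mem_biUnion, Finset.mem_union]
    constructor
    · rintro ⟨i, hi | hi, hji⟩
      · exact Or.inl ⟨i, hi, hji⟩
      · exact Or.inr ⟨i, hi, hji⟩
    · rintro (⟨i, hi, hji⟩ | ⟨i, hi, hji⟩)
      · exact ⟨i, Or.inl hi, hji⟩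
      · exact ⟨i, Or.inr hi, hji⟩
  have hsum : sig (U₁.biUnion t) α + sig (U₂.biUnion t) α
      = sig ((U₁ ∪ U₂).biUnion t) α := by
    rw [hBunion, sig, sig, sig, Finset.sum_union hBdisj]
  have hle : sig ((U₁ ∪ U₂).biUnion t) α ≤ sig A α := by
    rw [hunion, hcov]
  have hcard : U₁.card + U₂.card = (Wset t A).card := by
    rw [← hunion, Finset.card_union_of_disjoint hdisj]
  have hmul : k * U₁.card + k * U₂.card = k * (Wset t A).card := by
    rw [← Nat.mul_add, hcard]
  omega

lemma NoSplit_to_Feas {t : ι → Finset (Fin n)} {A : Finset (Fin n)} {k : ℕ}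
    (ht : ∀ i, (t i).Nonempty) (hk : 1 ≤ k) (hcov : (Wset t A).biUnion t = A)
    (hWne : (Wset t A).Nonempty) (hns : NoSplit t A) : Feas t A k := by
  classical
  set W := Wset t A with hW
  -- grow a connected subfamily
  have grow : ∀ d (V : Finset ι), V ⊆ W → V.Nonempty → (W \ V).card = d →
      (∃ α : Fin n →₀ ℕ, (∀ j ∉ V.biUnion t, α j = 0) ∧
        sig (V.biUnion t) α + 1 = k * V.card ∧
        ∀ U ⊆ V, U.biUnion t ≠ V.biUnion t → k * U.card ≤ sig (U.biUnion t) α) →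
      (∃ α : Fin n →₀ ℕ, (∀ j ∉ W.biUnion t, α j = 0) ∧
        sig (W.biUnion t) α + 1 = k * W.card ∧
        ∀ U ⊆ W, U.biUnion t ≠ W.biUnion t → k * U.card ≤ sig (U.biUnion t) α) := by
    intro d
    induction d with
    | zero =>
        intro V hVW hVne hcard hLF
        have : V = W := le_antisymm hVW (Finset.sdiff_eq_empty_iff_subset.mp
          (Finset.card_eq_zero.mp hcard))
        rwa [this] at hLF
    | succ d ih =>
        intro V hVW hVne hcard hLF
        obtain ⟨α, hsupp, hsig, hcon⟩ := hLF
        have hWVne : (W \ V).Nonempty := by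
          rw [← Finset.card_pos, hcard]; omega
        have hnd := hns V (W \ V) (Finset.union_sdiff_of_subset hVW)
          Finset.disjoint_sdiff hVne hWVne
        obtain ⟨c, hc₁, hc₂⟩ := Finset.not_disjoint_iff.mp hnd
        obtain ⟨i', hi'WV, hci'⟩ := Finset.mem_biUnion.mp hc₂
        have hi'V : i' ∉ V := (Finset.mem_sdiff.mp hi'WV).2
        have hi'W : i' ∈ W := (Finset.mem_sdiff.mp hi'WV).1
        set V' := insert i' V with hV'
        have hV'W : V' ⊆ W := Finset.insert_subset hi'W hVW
        have hBVB : V.biUnion t ⊆ V'.biUnion t :=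
          Finset.biUnion_subset_biUnion_of_subset_left t (Finset.subset_insert i' V)
        have hBV' : V'.biUnion t = t i' ∪ V.biUnion t := Finset.biUnion_insert
        have hcV' : c ∈ V'.biUnion t := hBVB hc₁
        refine ih V' hV'W ⟨i', Finset.mem_insert_self i' V⟩ ?_ ?_
        · have h1 : (W \ V').card = (W \ V).card - 1 := by
            rw [hV', Finset.sdiff_insert]
            rw [Finset.card_erase_of_mem (Finset.mem_sdiff.mpr ⟨hi'W, hi'V⟩)]
          omega
        · refine ⟨α + Finsupp.single c k, ?_, ?_, ?_⟩
          · intro j hj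
            rw [Finsupp.add_apply, hsupp j fun hjB => hj (hBVB hjB), Finsupp.single_apply]
            rw [if_neg (fun (hcj : c = j) => hj (hcj ▸ hcV'))]
            rfl
          · rw [sig_add, sig_single, if_pos hcV',
              sig_eq_of_subset hBVB fun j hj => hsupp j hj,
              Finset.card_insert_of_notMem hi'V]
            have : k * (V.card + 1) = k * V.card + k := by ring
            omega
          · intro U hUV' hBU
            by_cases hi'U : i' ∈ U
            · set U₀ := U.erase i' with hU₀
              have hU₀V : U₀ ⊆ V := fun x hx => by
                rcases Finset.mem_insert.mp (hUV' (Finset.mem_of_mem_erase hx)) with h | h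
                · exact absurd h (Finset.ne_of_mem_erase hx)
                · exact h
              have hUeq : U = insert i' U₀ := (Finset.insert_erase hi'U).symm
              have hcardU : U.card = U₀.card + 1 := by
                rw [hUeq, Finset.card_insert_of_notMem (Finset.notMem_erase i' U)]
              have hcBU : c ∈ U.biUnion t := Finset.mem_biUnion.mpr ⟨i', hi'U, hci'⟩
              have hsigBU : sig (U.biUnion t) (α + Finsupp.single c k)
                  = sig (U.biUnion t) α + k := by
                rw [sig_add, sig_single, if_pos hcBU]
              have hkey : k * U₀.card ≤ sig (U.biUnion t) α := by
                by_cases hBU₀ : U₀.biUnion t = V.biUnion t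
                · have hBUeq : U.biUnion t = V'.biUnion t := by
                    rw [hUeq, Finset.biUnion_insert, hBU₀, hBV']
                  by_cases hU₀V' : U₀ = V
                  · exact absurd hBUeq hBU
                  · have hss : U₀ ⊂ V := lt_of_le_of_ne hU₀V hU₀V'
                    have hlt : U₀.card < V.card := Finset.card_lt_card hss
                    have : sig (U.biUnion t) α = sig (V.biUnion t) α := by
                      rw [hBUeq, hBV']
                      rw [← sig_eq_of_subset (Finset.subset_union_right)
                        fun j hj => hsupp j hj]
                    rw [this]
                    have hmul : k * (U₀.card + 1) ≤ k * V.card :=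
                      Nat.mul_le_mul_left k hlt
                    rw [Nat.mul_add] at hmul
                    omega
                · have h1 := hcon U₀ hU₀V hBU₀
                  refine le_trans h1 (sig_mono_set ?_ α)
                  rw [hUeq]
                  exact Finset.biUnion_subset_biUnion_of_subset_left t
                    (Finset.subset_insert i' U₀)
              rw [hsigBU, hcardU]
              have : k * (U₀.card + 1) = k * U₀.card + k := by ring
              omega
            · have hUV : U ⊆ V := fun x hx => by
                rcases Finset.mem_insert.mp (hUV' hx) with h | h
                · exact absurd (h ▸ hx) hi'U
                · exact h
              by_cases hBUV : U.biUnion t = V.biUnion t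
              · have hcBU : c ∈ U.biUnion t := hBUV ▸ hc₁
                rw [sig_add, sig_single, if_pos hcBU, hBUV,
                  sig_eq_of_subset (le_refl (V.biUnion t)) fun j hj => hsupp j hj]
                have := Finset.card_le_card hUV
                have hmul : k * U.card ≤ k * V.card := Nat.mul_le_mul_left k this
                omega
              · have h1 := hcon U hUV hBUV
                rw [sig_add]
                omega
  -- base case of the growth
  obtain ⟨i₀, hi₀⟩ := hWne
  obtain ⟨c₀, hc₀⟩ := ht i₀
  have hbase : ∃ α : Fin n →₀ ℕ, (∀ j ∉ ({i₀} : Finset ι).biUnion t, α j = 0) ∧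
      sig (({i₀} : Finset ι).biUnion t) α + 1 = k * ({i₀} : Finset ι).card ∧
      ∀ U ⊆ ({i₀} : Finset ι), U.biUnion t ≠ ({i₀} : Finset ι).biUnion t →
        k * U.card ≤ sig (U.biUnion t) α := by
    refine ⟨Finsupp.single c₀ (k - 1), ?_, ?_, ?_⟩
    · intro j hj
      rw [Finset.singleton_biUnion] at hj
      rw [Finsupp.single_apply, if_neg (fun (hcj : c₀ = j) => hj (hcj ▸ hc₀))]
    · rw [Finset.singleton_biUnion, sig_single, if_pos hc₀, Finset.card_singleton]
      omega
    · intro U hU hBU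
      rcases Finset.subset_singleton_iff.mp hU with rfl | rfl
      · simp
      · exact absurd rfl hBU
  obtain ⟨α, h1, h2, h3⟩ := grow (W \ {i₀}).card {i₀}
    (Finset.singleton_subset_iff.mpr hi₀) ⟨i₀, Finset.mem_singleton_self i₀⟩ rfl hbase
  rw [hW] at h2 h3
  rw [hcov] at h2
  refine ⟨α, h2, ?_⟩
  intro U hUW hBU
  exact h3 U hUW (by rwa [hcov])



/-! ### Transfer between a family and its k-fold repetition -/

section Kfold

variable {t : ι → Finset (Fin n)} {A : Finset (Fin n)} {k : ℕ}

lemma Wset_prod :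
    Wset (fun p : ι × Fin k => t p.1) A = (Wset t A) ×ˢ (Finset.univ : Finset (Fin k)) := by
  ext ⟨i, c⟩
  simp [Wset, Finset.mem_product, Finset.mem_filter]

lemma biUnion_prod (hk : 0 < k) (U : Finset ι) :
    (U ×ˢ (Finset.univ : Finset (Fin k))).biUnion (fun p : ι × Fin k => t p.1)
      = U.biUnion t := by
  ext j
  simp only [Finset.mem_biUnion, Finset.mem_product]
  constructor
  · rintro ⟨⟨i, c⟩, ⟨hi, -⟩, hj⟩
    exact ⟨i, hi, hj⟩
  · rintro ⟨i, hi, hj⟩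
    exact ⟨⟨i, ⟨0, hk⟩⟩, ⟨hi, Finset.mem_univ _⟩, hj⟩

lemma cover_prod (hk : 0 < k) :
    (Wset (fun p : ι × Fin k => t p.1) A).biUnion (fun p : ι × Fin k => t p.1)
      = (Wset t A).biUnion t := by
  rw [Wset_prod, biUnion_prod hk]

lemma Feas_prod_iff (hk : 0 < k) :
    Feas (fun p : ι × Fin k => t p.1) A 1 ↔ Feas t A k := by
  have hcard : (Wset (fun p : ι × Fin k => t p.1) A).card = (Wset t A).card * k := by
    rw [Wset_prod, Finset.card_product, Finset.card_univ, Fintype.card_fin]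
  constructor
  · rintro ⟨α, hs, hcon⟩
    rw [hcard, one_mul] at hs
    have hcm : k * (Wset t A).card = (Wset t A).card * k := Nat.mul_comm _ _
    refine ⟨α, by omega, ?_⟩
    intro U hUW hBU
    have h1 := hcon (U ×ˢ (Finset.univ : Finset (Fin k)))
      (by rw [Wset_prod]; exact Finset.product_subset_product hUW (le_refl _))
      (by rw [biUnion_prod hk]; exact hBU)
    rw [biUnion_prod hk, one_mul, Finset.card_product, Finset.card_univ,
      Fintype.card_fin] at h1
    have hcm2 : k * U.card = U.card * k := Nat.mul_comm _ _
    omega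
  · rintro ⟨α, hs, hcon⟩
    have hcm : k * (Wset t A).card = (Wset t A).card * k := Nat.mul_comm _ _
    refine ⟨α, by rw [one_mul, hcard]; omega, ?_⟩
    intro U' hU'W hBU'
    set U := U'.image Prod.fst with hU
    have hBUeq : U.biUnion t = U'.biUnion (fun p : ι × Fin k => t p.1) := by
      ext j
      simp only [hU, Finset.mem_biUnion, Finset.mem_image]
      constructor
      · rintro ⟨i, ⟨⟨i', c⟩, hic, rfl⟩, hj⟩
        exact ⟨⟨i', c⟩, hic, hj⟩
      · rintro ⟨⟨i', c⟩, hic, hj⟩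
        exact ⟨i', ⟨⟨i', c⟩, hic, rfl⟩, hj⟩
    have hUW : U ⊆ Wset t A := by
      intro i hi
      obtain ⟨⟨i', c⟩, hic, rfl⟩ := Finset.mem_image.mp hi
      have := hU'W hic
      rw [Wset_prod, Finset.mem_product] at this
      exact this.1
    have hU'sub : U' ⊆ U ×ˢ (Finset.univ : Finset (Fin k)) := by
      rintro ⟨i, c⟩ hic
      rw [Finset.mem_product]
      exact ⟨Finset.mem_image.mpr ⟨⟨i, c⟩, hic, rfl⟩, Finset.mem_univ _⟩
    have hcardle : U'.card ≤ U.card * k := by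
      calc U'.card ≤ (U ×ˢ (Finset.univ : Finset (Fin k))).card := Finset.card_le_card hU'sub
        _ = U.card * k := by rw [Finset.card_product, Finset.card_univ, Fintype.card_fin]
    have h1 := hcon U hUW (by rwa [hBUeq])
    rw [← hBUeq]
    have hcm2 : k * U.card = U.card * k := Nat.mul_comm _ _
    omega

lemma HC_prod_iff (ht : ∀ i, (t i).Nonempty) (hk : 0 < k) :
    HC (fun p : ι × Fin k => t p.1) A ↔ HC t A := by
  have ht' : ∀ p : ι × Fin k, (t p.1).Nonempty := fun p => ht p.1
  constructor
  · intro h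
    obtain ⟨hcov', hfeas'⟩ := HC_to_NF ht' h
    have hcov : (Wset t A).biUnion t = A := by rw [← cover_prod hk]; exact hcov'
    have hfk : Feas t A k := (Feas_prod_iff hk).mp hfeas'
    obtain ⟨hne, hns⟩ := Feas_to_NoSplit ht hcov hfk
    exact NF_to_HC hcov (NoSplit_to_Feas ht (le_refl 1) hcov hne hns)
  · intro h
    obtain ⟨hcov, hfeas⟩ := HC_to_NF ht h
    obtain ⟨hne, hns⟩ := Feas_to_NoSplit ht hcov hfeas
    have hcov' : (Wset (fun p : ι × Fin k => t p.1) A).biUnion (fun p : ι × Fin k => t p.1)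
        = A := by rw [cover_prod hk]; exact hcov
    refine NF_to_HC hcov' ((Feas_prod_iff hk).mpr ?_)
    exact NoSplit_to_Feas ht hk hcov hne hns

end Kfold

/-- The inner existence statement of `ass_mem_iff_CC` is `HC`. -/
lemma CC_iff_HC (t : ι → Finset (Fin n)) (A : Finset (Fin n)) :
    (∃ a : Fin n →₀ ℕ, (∀ l ∈ A, Dom t (a + Finsupp.single l 1)) ∧
        (∀ b : Fin n →₀ ℕ, Dom t (a + b) → ∃ l ∈ A, b l ≠ 0)) ↔ HC t A := by
  unfold HC
  constructor
  · rintro ⟨a, h1, h2⟩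
    exact ⟨a, fun l hl => dom_iff_hall.mp (h1 l hl),
      fun b hb => h2 b (dom_iff_hall.mpr hb)⟩
  · rintro ⟨a, h1, h2⟩
    exact ⟨a, fun l hl => dom_iff_hall.mpr (h1 l hl),
      fun b hb => h2 b (dom_iff_hall.mp hb)⟩

/-- Main abstract statement: repeating every factor `k` times does not change
the associated primes. -/
theorem ass_mIdeal_prod_eq (t : ι → Finset (Fin n)) (ht : ∀ i, (t i).Nonempty)
    {k : ℕ} (hk : 0 < k) :
    associatedPrimes (MvPolynomial (Fin n) K) (MvPolynomial (Fin n) K ⧸ mIdeal t) =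
      associatedPrimes (MvPolynomial (Fin n) K)
        (MvPolynomial (Fin n) K ⧸ mIdeal (fun p : ι × Fin k => t p.1)) := by
  ext p
  rw [ass_mem_iff_CC t p, ass_mem_iff_CC (fun p : ι × Fin k => t p.1) p]
  constructor
  · rintro ⟨A, hA, hex⟩
    exact ⟨A, hA, (CC_iff_HC _ A).mpr ((HC_prod_iff ht hk).mpr ((CC_iff_HC t A).mp hex))⟩
  · rintro ⟨A, hA, hex⟩
    exact ⟨A, hA, (CC_iff_HC t A).mpr ((HC_prod_iff ht hk).mp ((CC_iff_HC _ A).mp hex))⟩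



end TransAss

open TransAss

/-- For a transversal polymatroidal ideal `I = P_1 ⋯ P_w`, i.e. a product of ideals each
generated by a nonempty subset of the variables, one has `Ass(R/I) = Ass(R/I^k)` for all
`k > 0`. -/
theorem transversal_ass_pow_eq {n w : ℕ} {K : Type*} [Field K]
    (P : Fin w → Ideal (MvPolynomial (Fin n) K))
    (hP : ∀ i, ∃ s : Set (Fin n), s.Nonempty ∧
      P i = Ideal.span ((fun j => (X j : MvPolynomial (Fin n) K)) '' s))
    (I : Ideal (MvPolynomial (Fin n) K)) (hI : I = ∏ i, P i)
    (k : ℕ) (hk : 0 < k) :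
    associatedPrimes (MvPolynomial (Fin n) K) (MvPolynomial (Fin n) K ⧸ I) =
      associatedPrimes (MvPolynomial (Fin n) K) (MvPolynomial (Fin n) K ⧸ I ^ k) := by
  classical
  choose s hsne hsP using hP
  set t : Fin w → Finset (Fin n) := fun i => (Set.toFinite (s i)).toFinset with ht
  have htco : ∀ i, ((t i : Finset (Fin n)) : Set (Fin n)) = s i := fun i =>
    Set.Finite.coe_toFinset _
  have htne : ∀ i, (t i).Nonempty := fun i => by
    obtain ⟨x, hx⟩ := hsne i
    exact ⟨x, (Set.Finite.mem_toFinset _).mpr hx⟩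
  have hPB : ∀ i, PB (t i) = P i := fun i => by
    rw [PB, htco, ← hsP]
  have hIm : I = mIdeal t := by
    rw [hI, mIdeal]
    exact (Finset.prod_congr rfl fun i _ => (hPB i).symm)
  have hIk : I ^ k = mIdeal (fun p : Fin w × Fin k => t p.1) := by
    rw [mIdeal, ← Finset.univ_product_univ, Finset.prod_product]
    have hinner : ∀ i : Fin w,
        (∏ _c : Fin k, (PB (t i) : Ideal (MvPolynomial (Fin n) K))) = PB (t i) ^ k := by
      intro i
      rw [Finset.prod_const, Finset.card_univ, Fintype.card_fin]
    rw [Finset.prod_congr rfl fun i _ => hinner i, Finset.prod_pow, hIm, mIdeal]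
  rw [hIk, hIm]
  exact ass_mIdeal_prod_eq t htne hk
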